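/- arXiv:2202.08688 — 2 statements merged into one kernel-verified Lean document; each statement's English description precedes it below -/
import Mathlib

section
/- Let q be a prime power, ℓ<k, and let S⊆V(F_q^k,ℓ) be nonempty. Let S↑ denote the set of (ℓ+1)-flats of F_q^k that contain at least one member of S, with μ(S↑) its fraction among all (ℓ+1)-flats. Then μ(S↑) ≥ μ(S)/(1−Φ(S)); here 1−Φ(S)>0 since the affine Grassmann walk remains at the same flat with positive probability. -/
open scoped Classical

/-- `A` is a `t`-flat: a nonempty affine subspace whose direction has dimension `t`. -/
def IsFlat (F : Type) [Field F] {n : ℕ} (t : ℕ) (A : AffineSubspace F (Fin n → F)) : Prop :=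
  (A : Set (Fin n → F)).Nonempty ∧ Module.finrank F A.direction = t
/-- `μ(S)`: fraction of `ℓ`-flats of `F^k` that lie in `S`. -/
noncomputable def mu (F : Type) [Field F] (k ℓ : ℕ) (S : Set (AffineSubspace F (Fin k → F))) : ℝ :=
  (Nat.card {A : AffineSubspace F (Fin k → F) // IsFlat F ℓ A ∧ A ∈ S} : ℝ) /
  (Nat.card {A : AffineSubspace F (Fin k → F) // IsFlat F ℓ A} : ℝ)

/-- `μ(S_x)`: fraction of `ℓ`-flats containing `x` that lie in `S`. -/
noncomputable def muIn (F : Type) [Field F] (k ℓ : ℕ) (S : Set (AffineSubspace F (Fin k → F)))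
    (x : Fin k → F) : ℝ :=
  (Nat.card {A : AffineSubspace F (Fin k → F) // IsFlat F ℓ A ∧ x ∈ A ∧ A ∈ S} : ℝ) /
  (Nat.card {A : AffineSubspace F (Fin k → F) // IsFlat F ℓ A ∧ x ∈ A} : ℝ)

/-- `μ(S_{y,lin})`: fraction of `ℓ`-flats whose linear part contains `y` that lie in `S`. -/
noncomputable def muInLin (F : Type) [Field F] (k ℓ : ℕ) (S : Set (AffineSubspace F (Fin k → F)))
    (y : Fin k → F) : ℝ :=
  (Nat.card {A : AffineSubspace F (Fin k → F) // IsFlat F ℓ A ∧ y ∈ A.direction ∧ A ∈ S} : ℝ) /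
  (Nat.card {A : AffineSubspace F (Fin k → F) // IsFlat F ℓ A ∧ y ∈ A.direction} : ℝ)

/-- `μ(S_W)`: fraction of `ℓ`-flats contained in `W` that lie in `S`. -/
noncomputable def muOut (F : Type) [Field F] (k ℓ : ℕ) (S : Set (AffineSubspace F (Fin k → F)))
    (W : AffineSubspace F (Fin k → F)) : ℝ :=
  (Nat.card {A : AffineSubspace F (Fin k → F) // IsFlat F ℓ A ∧ A ≤ W ∧ A ∈ S} : ℝ) /
  (Nat.card {A : AffineSubspace F (Fin k → F) // IsFlat F ℓ A ∧ A ≤ W} : ℝ)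

/-- translate a flat by a vector. -/
noncomputable def translateFlat (F : Type) [Field F] {k : ℕ} (x : Fin k → F)
    (A : AffineSubspace F (Fin k → F)) : AffineSubspace F (Fin k → F) :=
  A.map (AffineEquiv.constVAdd F (Fin k → F) x).toAffineMap

/-- `μ(S_{W,lin})` for a linear hyperplane `W`: probability that `x + A ∈ S` for a uniformly
random `ℓ`-flat `A ⊆ W` and a uniformly random `x ∉ W`. -/
noncomputable def muOutLin (F : Type) [Field F] (k ℓ : ℕ) (S : Set (AffineSubspace F (Fin k → F)))
    (W : Submodule F (Fin k → F)) : ℝ :=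
  (Nat.card {P : AffineSubspace F (Fin k → F) × (Fin k → F) //
      IsFlat F ℓ P.1 ∧ (P.1 : Set (Fin k → F)) ⊆ (W : Set (Fin k → F)) ∧ P.2 ∉ W ∧
      translateFlat F P.2 P.1 ∈ S} : ℝ) /
  (Nat.card {P : AffineSubspace F (Fin k → F) × (Fin k → F) //
      IsFlat F ℓ P.1 ∧ (P.1 : Set (Fin k → F)) ⊆ (W : Set (Fin k → F)) ∧ P.2 ∉ W} : ℝ)

/-- Triples `(A, B, A')` of the affine Grassmann walk: `A, A'` are `ℓ`-flats, `B` an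
`(ℓ+1)`-flat, with `A ⊆ B` and `A' ⊆ B`. -/
def walkTriple (F : Type) [Field F] (k ℓ : ℕ)
    (T : AffineSubspace F (Fin k → F) × AffineSubspace F (Fin k → F) ×
      AffineSubspace F (Fin k → F)) : Prop :=
  IsFlat F ℓ T.1 ∧ IsFlat F (ℓ + 1) T.2.1 ∧ IsFlat F ℓ T.2.2 ∧ T.1 ≤ T.2.1 ∧ T.2.2 ≤ T.2.1

/-- `1 − Φ(S)`: the probability that one step of the affine Grassmann walk started from a
uniform element of `S` stays in `S`. -/
noncomputable def stayProb (F : Type) [Field F] (k ℓ : ℕ)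
    (S : Set (AffineSubspace F (Fin k → F))) : ℝ :=
  (Nat.card {T : AffineSubspace F (Fin k → F) × AffineSubspace F (Fin k → F) ×
      AffineSubspace F (Fin k → F) // walkTriple F k ℓ T ∧ T.1 ∈ S ∧ T.2.2 ∈ S} : ℝ) /
  (Nat.card {T : AffineSubspace F (Fin k → F) × AffineSubspace F (Fin k → F) ×
      AffineSubspace F (Fin k → F) // walkTriple F k ℓ T ∧ T.1 ∈ S} : ℝ)

/-- The upper shadow of `S`: `(ℓ+1)`-flats containing a member of `S`. -/
def upShadow (F : Type) [Field F] (k ℓ : ℕ) (S : Set (AffineSubspace F (Fin k → F))) :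
    Set (AffineSubspace F (Fin k → F)) :=
  {B | IsFlat F (ℓ + 1) B ∧ ∃ A ∈ S, A ≤ B}

/-- pseudo-randomness with respect to zoom-ins. -/
def prZoomIn (F : Type) [Field F] (k ℓ : ℕ) (S : Set (AffineSubspace F (Fin k → F)))
    (ξ : ℝ) : Prop :=
  ∀ x : Fin k → F, muIn F k ℓ S x ≤ ξ

/-- pseudo-randomness with respect to zoom-ins on the linear part. -/
def prZoomInLin (F : Type) [Field F] (k ℓ : ℕ) (S : Set (AffineSubspace F (Fin k → F)))
    (ξ : ℝ) : Prop :=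
  ∀ y : Fin k → F, y ≠ 0 → muInLin F k ℓ S y ≤ ξ

/-- pseudo-randomness with respect to zoom-outs (affine hyperplanes). -/
def prZoomOut (F : Type) [Field F] (k ℓ : ℕ) (S : Set (AffineSubspace F (Fin k → F)))
    (ξ : ℝ) : Prop :=
  ∀ W : AffineSubspace F (Fin k → F), IsFlat F (k - 1) W → muOut F k ℓ S W ≤ ξ

/-- pseudo-randomness with respect to zoom-outs on the linear part (linear hyperplanes). -/
def prZoomOutLin (F : Type) [Field F] (k ℓ : ℕ) (S : Set (AffineSubspace F (Fin k → F)))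
    (ξ : ℝ) : Prop :=
  ∀ W : Submodule F (Fin k → F), Module.finrank F W = k - 1 → muOutLin F k ℓ S W ≤ ξ

namespace ShadowAux


open Module

variable {F : Type} [Field F] {k : ℕ}

lemma map_symm_map (ψ : (Fin k → F) ≃ᵃ[F] (Fin k → F)) (A : AffineSubspace F (Fin k → F)) :
    (A.map ψ.toAffineMap).map ψ.symm.toAffineMap = A := by
  rw [AffineSubspace.map_map]
  convert AffineSubspace.map_id A using 2
  ext x
  simp

lemma map_map_symm (ψ : (Fin k → F) ≃ᵃ[F] (Fin k → F)) (A : AffineSubspace F (Fin k → F)) :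
    (A.map ψ.symm.toAffineMap).map ψ.toAffineMap = A := by
  rw [AffineSubspace.map_map]
  convert AffineSubspace.map_id A using 2
  ext x
  simp

lemma map_mono (f : (Fin k → F) →ᵃ[F] (Fin k → F)) {A B : AffineSubspace F (Fin k → F)}
    (h : A ≤ B) : A.map f ≤ B.map f := by
  rw [AffineSubspace.le_def] at h ⊢
  rw [AffineSubspace.coe_map, AffineSubspace.coe_map]
  exact Set.image_mono h

lemma isFlat_map {t : ℕ} (ψ : (Fin k → F) ≃ᵃ[F] (Fin k → F)) {A : AffineSubspace F (Fin k → F)}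
    (h : IsFlat F t A) : IsFlat F t (A.map ψ.toAffineMap) := by
  obtain ⟨hne, hd⟩ := h
  refine ⟨?_, ?_⟩
  · rw [AffineSubspace.coe_map]; exact hne.image _
  · rw [AffineSubspace.map_direction, AffineEquiv.linear_toAffineMap, ← hd]
    exact LinearEquiv.finrank_map_eq ψ.linear A.direction

lemma exists_affineEquiv {t : ℕ} (A A' : AffineSubspace F (Fin k → F))
    (hA : IsFlat F t A) (hA' : IsFlat F t A') :
    ∃ ψ : (Fin k → F) ≃ᵃ[F] (Fin k → F), A.map ψ.toAffineMap = A' := by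
  obtain ⟨⟨a, ha⟩, hdA⟩ := hA
  obtain ⟨⟨a', ha'⟩, hdA'⟩ := hA'
  obtain ⟨Uc, hc⟩ := Submodule.exists_isCompl A.direction
  obtain ⟨Uc', hc'⟩ := Submodule.exists_isCompl A'.direction
  have h1 : finrank F A.direction = finrank F A'.direction := by rw [hdA, hdA']
  have h2 : finrank F Uc = finrank F Uc' := by
    have g1 := Submodule.finrank_add_eq_of_isCompl hc
    have g2 := Submodule.finrank_add_eq_of_isCompl hc'
    omega
  let e1 : (A.direction : Submodule F (Fin k → F)) ≃ₗ[F] A'.direction :=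
    LinearEquiv.ofFinrankEq _ _ h1
  let e2 : Uc ≃ₗ[F] Uc' := LinearEquiv.ofFinrankEq _ _ h2
  let e : (Fin k → F) ≃ₗ[F] (Fin k → F) :=
    ((Submodule.prodEquivOfIsCompl _ _ hc).symm.trans (e1.prodCongr e2)).trans
      (Submodule.prodEquivOfIsCompl _ _ hc')
  have hmaple : A.direction.map (e : (Fin k → F) →ₗ[F] (Fin k → F)) ≤ A'.direction := by
    rintro x ⟨u, hu, rfl⟩
    have : e u = ↑(e1 ⟨u, hu⟩) := by
      show (Submodule.prodEquivOfIsCompl _ _ hc') ((e1.prodCongr e2)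
        ((Submodule.prodEquivOfIsCompl _ _ hc).symm
          ((⟨u, hu⟩ : A.direction) : Fin k → F))) = _
      rw [Submodule.prodEquivOfIsCompl_symm_apply_left]
      simp
    show (e : (Fin k → F) →ₗ[F] (Fin k → F)) u ∈ A'.direction
    rw [LinearEquiv.coe_coe, this]
    exact (e1 ⟨u, hu⟩).2
  have hmap : A.direction.map (e : (Fin k → F) →ₗ[F] (Fin k → F)) = A'.direction := by
    apply Submodule.eq_of_le_of_finrank_le hmaple
    rw [LinearEquiv.finrank_map_eq e A.direction, hdA, hdA']
  refine ⟨((AffineEquiv.constVAdd F (Fin k → F) (-a)).trans e.toAffineEquiv).trans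
    (AffineEquiv.constVAdd F (Fin k → F) a'), ?_⟩
  apply SetLike.coe_injective
  rw [AffineSubspace.coe_map]
  ext z
  simp only [Set.mem_image, AffineEquiv.coe_toAffineMap, AffineEquiv.trans_apply,
    AffineEquiv.constVAdd_apply, LinearEquiv.coe_toAffineEquiv, vadd_eq_add]
  constructor
  · rintro ⟨x, hx, rfl⟩
    have h3 : (-a + x) ∈ A.direction := by
      have := AffineSubspace.vsub_mem_direction hx ha
      rwa [vsub_eq_sub, sub_eq_neg_add] at this
    have h4 : e (-a + x) ∈ A'.direction := hmap ▸ ⟨-a + x, h3, rfl⟩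
    have := AffineSubspace.vadd_mem_of_mem_direction h4 ha'
    rwa [vadd_eq_add, add_comm] at this
  · intro hz
    have h3 : z - a' ∈ A'.direction := by
      have := AffineSubspace.vsub_mem_direction hz ha'
      rwa [vsub_eq_sub] at this
    obtain ⟨w, hw, hew⟩ : ∃ w ∈ A.direction,
        (e : (Fin k → F) →ₗ[F] (Fin k → F)) w = z - a' := by
      rw [← hmap] at h3; exact h3
    refine ⟨a + w, ?_, ?_⟩
    · have := AffineSubspace.vadd_mem_of_mem_direction hw ha
      rwa [vadd_eq_add, add_comm] at this
    · have : (-a + (a + w)) = w := by ring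
      rw [this]
      have : e w = z - a' := hew
      rw [this]; ring

lemma card_up_congr {t t' : ℕ} (A A' : AffineSubspace F (Fin k → F))
    (hA : IsFlat F t A) (hA' : IsFlat F t A') :
    Nat.card {B : AffineSubspace F (Fin k → F) // IsFlat F t' B ∧ A ≤ B} =
      Nat.card {B : AffineSubspace F (Fin k → F) // IsFlat F t' B ∧ A' ≤ B} := by
  obtain ⟨ψ, hψ⟩ := exists_affineEquiv A A' hA hA'
  apply Nat.card_congr
  refine ⟨fun B => ⟨B.1.map ψ.toAffineMap, isFlat_map ψ B.2.1, hψ ▸ map_mono _ B.2.2⟩,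
    fun B => ⟨B.1.map ψ.symm.toAffineMap, isFlat_map ψ.symm B.2.1, ?_⟩,
    fun B => Subtype.ext (map_symm_map ψ B.1), fun B => Subtype.ext ?_⟩
  · have hA'' : A = A'.map ψ.symm.toAffineMap := by rw [← hψ, map_symm_map]
    rw [hA'']
    exact map_mono _ B.2.2
  · exact map_map_symm ψ B.1

lemma card_down_congr {t t' : ℕ} (A A' : AffineSubspace F (Fin k → F))
    (hA : IsFlat F t A) (hA' : IsFlat F t A') :
    Nat.card {B : AffineSubspace F (Fin k → F) // IsFlat F t' B ∧ B ≤ A} =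
      Nat.card {B : AffineSubspace F (Fin k → F) // IsFlat F t' B ∧ B ≤ A'} := by
  obtain ⟨ψ, hψ⟩ := exists_affineEquiv A A' hA hA'
  apply Nat.card_congr
  refine ⟨fun B => ⟨B.1.map ψ.toAffineMap, isFlat_map ψ B.2.1, hψ ▸ map_mono _ B.2.2⟩,
    fun B => ⟨B.1.map ψ.symm.toAffineMap, isFlat_map ψ.symm B.2.1, ?_⟩,
    fun B => Subtype.ext (map_symm_map ψ B.1), fun B => Subtype.ext ?_⟩
  · have hA'' : A = A'.map ψ.symm.toAffineMap := by rw [← hψ, map_symm_map]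
    rw [hA'']
    exact map_mono _ B.2.2
  · exact map_map_symm ψ B.1

lemma card_pair_fst {α β : Type*} [Fintype α] [Finite β] (W : α → β → Prop) :
    Nat.card {x : α × β // W x.1 x.2} = ∑ a : α, Nat.card {b : β // W a b} := by
  classical
  haveI : ∀ a, Fintype {b : β // W a b} := fun a => Fintype.ofFinite _
  rw [Nat.card_congr (Equiv.subtypeProdEquivSigmaSubtype W), Nat.card_eq_fintype_card,
    Fintype.card_sigma]
  exact Finset.sum_congr rfl fun a _ => (Nat.card_eq_fintype_card).symm

lemma sum_card_const {α : Type*} [Fintype α] {P : α → Prop} {f : α → ℕ} {c : ℕ}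
    (h1 : ∀ a, P a → f a = c) (h0 : ∀ a, ¬P a → f a = 0) :
    ∑ a : α, f a = Nat.card {a : α // P a} * c := by
  classical
  have hf : ∀ a : α, f a = if P a then c else 0 := fun a => by
    by_cases h : P a <;> simp [h, h1 a, h0 a]
  calc ∑ a : α, f a = ∑ a ∈ Finset.univ.filter P, c := by
        rw [Finset.sum_filter]
        exact Finset.sum_congr rfl fun a _ => hf a
    _ = (Finset.univ.filter P).card * c := by rw [Finset.sum_const, smul_eq_mul]
    _ = Nat.card {a : α // P a} * c := by
        rw [Nat.card_eq_fintype_card, Fintype.card_subtype]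

lemma swap_pair_card {α : Type*} (W : α → α → Prop) :
    Nat.card {x : α × α // W x.1 x.2} = Nat.card {x : α × α // W x.2 x.1} :=
  Nat.card_congr ⟨fun x => ⟨(x.1.2, x.1.1), x.2⟩, fun x => ⟨(x.1.2, x.1.1), x.2⟩,
    fun _ => rfl, fun _ => rfl⟩

end ShadowAux

/-- For a nonempty set `S` of `ℓ`-flats, `μ(S↑) ≥ μ(S)/(1−Φ(S))`, and
`1 − Φ(S) > 0`. -/
theorem shadow_lower_bound (q : ℕ) (hq : IsPrimePow q)
    (F : Type) [Field F] [Fintype F] (hF : Fintype.card F = q)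
    (k ℓ : ℕ) (hlk : ℓ < k)
    (S : Set (AffineSubspace F (Fin k → F)))
    (hSsub : ∀ A ∈ S, IsFlat F ℓ A) (hSne : S.Nonempty) :
    0 < stayProb F k ℓ S ∧
      mu F k (ℓ + 1) (upShadow F k ℓ S) ≥ mu F k ℓ S / stayProb F k ℓ S := by
  classical
  haveI hfin : Finite (AffineSubspace F (Fin k → F)) :=
    Finite.of_injective (fun A => (A : Set (Fin k → F))) SetLike.coe_injective
  haveI : Fintype (AffineSubspace F (Fin k → F)) := Fintype.ofFinite _
  obtain ⟨A₀, hA₀S⟩ := hSne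
  have hA₀ : IsFlat F ℓ A₀ := hSsub A₀ hA₀S
  obtain ⟨a, ha⟩ := hA₀.1
  have hVk : Module.finrank F (Fin k → F) = k := Module.finrank_fin_fun F
  have hUtop : A₀.direction ≠ ⊤ := by
    intro h
    have h2 := hA₀.2
    rw [h, finrank_top, hVk] at h2
    omega
  obtain ⟨x, hx⟩ : ∃ x, x ∉ A₀.direction := by
    by_contra h
    push_neg at h
    exact hUtop (Submodule.eq_top_iff'.mpr h)
  have hx0 : x ≠ 0 := fun h => hx (h ▸ A₀.direction.zero_mem)
  have hdisj : Disjoint A₀.direction (Submodule.span F {x}) :=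
    (Submodule.disjoint_span_singleton' hx0).mpr hx
  have hU' : Module.finrank F
      ((A₀.direction ⊔ Submodule.span F {x} : Submodule F (Fin k → F))) = ℓ + 1 := by
    have h1 := Submodule.finrank_sup_add_finrank_inf_eq A₀.direction (Submodule.span F {x})
    rw [hdisj.eq_bot, finrank_bot, finrank_span_singleton hx0, hA₀.2] at h1
    omega
  obtain ⟨B₀, hB₀, hA₀B₀⟩ : ∃ B₀ : AffineSubspace F (Fin k → F),
      IsFlat F (ℓ + 1) B₀ ∧ A₀ ≤ B₀ := by
    refine ⟨AffineSubspace.mk' a (A₀.direction ⊔ Submodule.span F {x}),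
      ⟨AffineSubspace.mk'_nonempty _ _, by rw [AffineSubspace.direction_mk']; exact hU'⟩, ?_⟩
    rw [AffineSubspace.le_def']
    intro p hp
    rw [AffineSubspace.mem_mk']
    exact Submodule.mem_sup_left (AffineSubspace.vsub_mem_direction hp ha)
  -- Constancy of up-degree and down-degree
  have hDup : ∀ B : AffineSubspace F (Fin k → F), IsFlat F ℓ B →
      Nat.card {C : AffineSubspace F (Fin k → F) // IsFlat F (ℓ + 1) C ∧ B ≤ C} =
        Nat.card {C : AffineSubspace F (Fin k → F) // IsFlat F (ℓ + 1) C ∧ A₀ ≤ C} :=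
    fun B hB => ShadowAux.card_up_congr B A₀ hB hA₀
  have hddown : ∀ B : AffineSubspace F (Fin k → F), IsFlat F (ℓ + 1) B →
      Nat.card {C : AffineSubspace F (Fin k → F) // IsFlat F ℓ C ∧ C ≤ B} =
        Nat.card {C : AffineSubspace F (Fin k → F) // IsFlat F ℓ C ∧ C ≤ B₀} :=
    fun B hB => ShadowAux.card_down_congr B B₀ hB hB₀
  set D : ℕ := Nat.card {C : AffineSubspace F (Fin k → F) // IsFlat F (ℓ + 1) C ∧ A₀ ≤ C}
    with hDdef
  set d : ℕ := Nat.card {C : AffineSubspace F (Fin k → F) // IsFlat F ℓ C ∧ C ≤ B₀} with hddef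
  set deg : AffineSubspace F (Fin k → F) → ℕ := fun B =>
    Nat.card {A : AffineSubspace F (Fin k → F) //
      IsFlat F (ℓ + 1) B ∧ (IsFlat F ℓ A ∧ A ∈ S) ∧ A ≤ B} with hdegdef
  -- N1 = |S| * (D * d)
  have hN1 : Nat.card {T : AffineSubspace F (Fin k → F) × AffineSubspace F (Fin k → F) ×
        AffineSubspace F (Fin k → F) // walkTriple F k ℓ T ∧ T.1 ∈ S} =
      Nat.card {A : AffineSubspace F (Fin k → F) // IsFlat F ℓ A ∧ A ∈ S} * (D * d) := by
    calc Nat.card {T : AffineSubspace F (Fin k → F) × AffineSubspace F (Fin k → F) ×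
          AffineSubspace F (Fin k → F) // walkTriple F k ℓ T ∧ T.1 ∈ S}
        = ∑ b : AffineSubspace F (Fin k → F),
            Nat.card {c : AffineSubspace F (Fin k → F) × AffineSubspace F (Fin k → F) //
              walkTriple F k ℓ (b, c.1, c.2) ∧ b ∈ S} :=
          ShadowAux.card_pair_fst
            (fun (b : AffineSubspace F (Fin k → F))
                 (c : AffineSubspace F (Fin k → F) × AffineSubspace F (Fin k → F)) =>
              walkTriple F k ℓ (b, c.1, c.2) ∧ b ∈ S)
      _ = Nat.card {A : AffineSubspace F (Fin k → F) // IsFlat F ℓ A ∧ A ∈ S} * (D * d) := by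
          apply ShadowAux.sum_card_const (P := fun b => IsFlat F ℓ b ∧ b ∈ S)
          · intro b hb
            calc Nat.card {c : AffineSubspace F (Fin k → F) × AffineSubspace F (Fin k → F) //
                  walkTriple F k ℓ (b, c.1, c.2) ∧ b ∈ S}
                = ∑ B : AffineSubspace F (Fin k → F),
                    Nat.card {c : AffineSubspace F (Fin k → F) //
                      walkTriple F k ℓ (b, B, c) ∧ b ∈ S} :=
                  ShadowAux.card_pair_fst
                    (fun (B : AffineSubspace F (Fin k → F))
                         (c : AffineSubspace F (Fin k → F)) =>
                      walkTriple F k ℓ (b, B, c) ∧ b ∈ S)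
              _ = Nat.card {B : AffineSubspace F (Fin k → F) //
                    IsFlat F (ℓ + 1) B ∧ b ≤ B} * d := by
                  apply ShadowAux.sum_card_const (P := fun B => IsFlat F (ℓ + 1) B ∧ b ≤ B)
                  · intro B hB
                    have heq : Nat.card {c : AffineSubspace F (Fin k → F) //
                          walkTriple F k ℓ (b, B, c) ∧ b ∈ S} =
                        Nat.card {c : AffineSubspace F (Fin k → F) //
                          IsFlat F ℓ c ∧ c ≤ B} :=
                      Nat.card_congr (Equiv.subtypeEquivRight (fun c => by
                        simp only [walkTriple]
                        exact ⟨fun h => ⟨h.1.2.2.1, h.1.2.2.2.2⟩,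
                          fun h => ⟨⟨hb.1, hB.1, h.1, hB.2, h.2⟩, hb.2⟩⟩))
                    rw [heq, hddown B hB.1]
                  · intro B hB
                    haveI : IsEmpty {c : AffineSubspace F (Fin k → F) //
                        walkTriple F k ℓ (b, B, c) ∧ b ∈ S} :=
                      ⟨fun c => hB ⟨c.2.1.2.1, c.2.1.2.2.2.1⟩⟩
                    exact Nat.card_of_isEmpty
              _ = D * d := by rw [hDup b hb.1]
          · intro b hb
            haveI : IsEmpty {c : AffineSubspace F (Fin k → F) × AffineSubspace F (Fin k → F) //
                walkTriple F k ℓ (b, c.1, c.2) ∧ b ∈ S} :=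
              ⟨fun c => hb ⟨c.2.1.1, c.2.2⟩⟩
            exact Nat.card_of_isEmpty
  -- N2 = sum of squared degrees
  have hN2 : Nat.card {T : AffineSubspace F (Fin k → F) × AffineSubspace F (Fin k → F) ×
        AffineSubspace F (Fin k → F) // walkTriple F k ℓ T ∧ T.1 ∈ S ∧ T.2.2 ∈ S} =
      ∑ b : AffineSubspace F (Fin k → F), deg b * deg b := by
    calc Nat.card {T : AffineSubspace F (Fin k → F) × AffineSubspace F (Fin k → F) ×
          AffineSubspace F (Fin k → F) // walkTriple F k ℓ T ∧ T.1 ∈ S ∧ T.2.2 ∈ S}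
        = Nat.card {x : AffineSubspace F (Fin k → F) × AffineSubspace F (Fin k → F) ×
            AffineSubspace F (Fin k → F) //
            walkTriple F k ℓ (x.2.1, x.1, x.2.2) ∧ x.2.1 ∈ S ∧ x.2.2 ∈ S} :=
          Nat.card_congr ⟨fun T => ⟨(T.1.2.1, T.1.1, T.1.2.2), T.2⟩,
            fun x => ⟨(x.1.2.1, x.1.1, x.1.2.2), x.2⟩, fun _ => rfl, fun _ => rfl⟩
      _ = ∑ b : AffineSubspace F (Fin k → F),
            Nat.card {ac : AffineSubspace F (Fin k → F) × AffineSubspace F (Fin k → F) //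
              walkTriple F k ℓ (ac.1, b, ac.2) ∧ ac.1 ∈ S ∧ ac.2 ∈ S} :=
          ShadowAux.card_pair_fst
            (fun (b : AffineSubspace F (Fin k → F))
                 (ac : AffineSubspace F (Fin k → F) × AffineSubspace F (Fin k → F)) =>
              walkTriple F k ℓ (ac.1, b, ac.2) ∧ ac.1 ∈ S ∧ ac.2 ∈ S)
      _ = ∑ b : AffineSubspace F (Fin k → F), deg b * deg b := by
          refine Finset.sum_congr rfl fun b _ => ?_
          calc Nat.card {ac : AffineSubspace F (Fin k → F) × AffineSubspace F (Fin k → F) //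
                walkTriple F k ℓ (ac.1, b, ac.2) ∧ ac.1 ∈ S ∧ ac.2 ∈ S}
              = Nat.card ({a : AffineSubspace F (Fin k → F) //
                    IsFlat F (ℓ + 1) b ∧ (IsFlat F ℓ a ∧ a ∈ S) ∧ a ≤ b} ×
                  {c : AffineSubspace F (Fin k → F) //
                    IsFlat F (ℓ + 1) b ∧ (IsFlat F ℓ c ∧ c ∈ S) ∧ c ≤ b}) :=
                Nat.card_congr ((Equiv.subtypeEquivRight (fun ac => by
                  simp only [walkTriple]
                  exact ⟨fun h => ⟨⟨h.1.2.1, ⟨h.1.1, h.2.1⟩, h.1.2.2.2.1⟩,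
                      ⟨h.1.2.1, ⟨h.1.2.2.1, h.2.2⟩, h.1.2.2.2.2⟩⟩,
                    fun h => ⟨⟨h.1.2.1.1, h.1.1, h.2.2.1.1, h.1.2.2, h.2.2.2⟩,
                      h.1.2.1.2, h.2.2.1.2⟩⟩)).trans (Equiv.subtypeProdEquivProd))
              _ = deg b * deg b := by simp only [hdegdef, Nat.card_prod]
  -- M = |S| * D and M = sum of degrees
  have hM1 : Nat.card {x : AffineSubspace F (Fin k → F) × AffineSubspace F (Fin k → F) //
        ((IsFlat F ℓ x.1 ∧ x.1 ∈ S) ∧ IsFlat F (ℓ + 1) x.2 ∧ x.1 ≤ x.2)} =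
      Nat.card {A : AffineSubspace F (Fin k → F) // IsFlat F ℓ A ∧ A ∈ S} * D := by
    calc Nat.card {x : AffineSubspace F (Fin k → F) × AffineSubspace F (Fin k → F) //
          ((IsFlat F ℓ x.1 ∧ x.1 ∈ S) ∧ IsFlat F (ℓ + 1) x.2 ∧ x.1 ≤ x.2)}
        = ∑ a : AffineSubspace F (Fin k → F),
            Nat.card {B : AffineSubspace F (Fin k → F) //
              ((IsFlat F ℓ a ∧ a ∈ S) ∧ IsFlat F (ℓ + 1) B ∧ a ≤ B)} :=
          ShadowAux.card_pair_fst
            (fun (a : AffineSubspace F (Fin k → F)) (B : AffineSubspace F (Fin k → F)) =>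
              ((IsFlat F ℓ a ∧ a ∈ S) ∧ IsFlat F (ℓ + 1) B ∧ a ≤ B))
      _ = Nat.card {A : AffineSubspace F (Fin k → F) // IsFlat F ℓ A ∧ A ∈ S} * D := by
          apply ShadowAux.sum_card_const (P := fun a => IsFlat F ℓ a ∧ a ∈ S)
          · intro a ha2
            have heq : Nat.card {B : AffineSubspace F (Fin k → F) //
                  ((IsFlat F ℓ a ∧ a ∈ S) ∧ IsFlat F (ℓ + 1) B ∧ a ≤ B)} =
                Nat.card {B : AffineSubspace F (Fin k → F) // IsFlat F (ℓ + 1) B ∧ a ≤ B} :=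
              Nat.card_congr (Equiv.subtypeEquivRight (fun B =>
                ⟨fun h => h.2, fun h => ⟨ha2, h⟩⟩))
            rw [heq, hDup a ha2.1]
          · intro a ha2
            haveI : IsEmpty {B : AffineSubspace F (Fin k → F) //
                ((IsFlat F ℓ a ∧ a ∈ S) ∧ IsFlat F (ℓ + 1) B ∧ a ≤ B)} :=
              ⟨fun B => ha2 B.2.1⟩
            exact Nat.card_of_isEmpty
  have hM2 : Nat.card {x : AffineSubspace F (Fin k → F) × AffineSubspace F (Fin k → F) //
        ((IsFlat F ℓ x.1 ∧ x.1 ∈ S) ∧ IsFlat F (ℓ + 1) x.2 ∧ x.1 ≤ x.2)} =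
      ∑ b : AffineSubspace F (Fin k → F), deg b := by
    calc Nat.card {x : AffineSubspace F (Fin k → F) × AffineSubspace F (Fin k → F) //
          ((IsFlat F ℓ x.1 ∧ x.1 ∈ S) ∧ IsFlat F (ℓ + 1) x.2 ∧ x.1 ≤ x.2)}
        = Nat.card {x : AffineSubspace F (Fin k → F) × AffineSubspace F (Fin k → F) //
            ((IsFlat F ℓ x.2 ∧ x.2 ∈ S) ∧ IsFlat F (ℓ + 1) x.1 ∧ x.2 ≤ x.1)} :=
          ShadowAux.swap_pair_card
            (fun (a : AffineSubspace F (Fin k → F)) (B : AffineSubspace F (Fin k → F)) =>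
              ((IsFlat F ℓ a ∧ a ∈ S) ∧ IsFlat F (ℓ + 1) B ∧ a ≤ B))
      _ = ∑ b : AffineSubspace F (Fin k → F),
            Nat.card {a : AffineSubspace F (Fin k → F) //
              ((IsFlat F ℓ a ∧ a ∈ S) ∧ IsFlat F (ℓ + 1) b ∧ a ≤ b)} :=
          ShadowAux.card_pair_fst
            (fun (b : AffineSubspace F (Fin k → F)) (a : AffineSubspace F (Fin k → F)) =>
              ((IsFlat F ℓ a ∧ a ∈ S) ∧ IsFlat F (ℓ + 1) b ∧ a ≤ b))
      _ = ∑ b : AffineSubspace F (Fin k → F), deg b := by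
          refine Finset.sum_congr rfl fun b _ => ?_
          simp only [hdegdef]
          exact Nat.card_congr (Equiv.subtypeEquivRight (fun a =>
            ⟨fun h => ⟨h.2.1, h.1, h.2.2⟩, fun h => ⟨h.2.1, h.1, h.2.2⟩⟩))
  -- global pairs: Nl * D = Nl1 * d
  have hP2a : Nat.card {x : AffineSubspace F (Fin k → F) × AffineSubspace F (Fin k → F) //
        (IsFlat F ℓ x.1 ∧ IsFlat F (ℓ + 1) x.2 ∧ x.1 ≤ x.2)} =
      Nat.card {A : AffineSubspace F (Fin k → F) // IsFlat F ℓ A} * D := by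
    calc Nat.card {x : AffineSubspace F (Fin k → F) × AffineSubspace F (Fin k → F) //
          (IsFlat F ℓ x.1 ∧ IsFlat F (ℓ + 1) x.2 ∧ x.1 ≤ x.2)}
        = ∑ a : AffineSubspace F (Fin k → F),
            Nat.card {B : AffineSubspace F (Fin k → F) //
              (IsFlat F ℓ a ∧ IsFlat F (ℓ + 1) B ∧ a ≤ B)} :=
          ShadowAux.card_pair_fst
            (fun (a : AffineSubspace F (Fin k → F)) (B : AffineSubspace F (Fin k → F)) =>
              (IsFlat F ℓ a ∧ IsFlat F (ℓ + 1) B ∧ a ≤ B))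
      _ = Nat.card {A : AffineSubspace F (Fin k → F) // IsFlat F ℓ A} * D := by
          apply ShadowAux.sum_card_const (P := fun a => IsFlat F ℓ a)
          · intro a ha2
            have heq : Nat.card {B : AffineSubspace F (Fin k → F) //
                  (IsFlat F ℓ a ∧ IsFlat F (ℓ + 1) B ∧ a ≤ B)} =
                Nat.card {B : AffineSubspace F (Fin k → F) // IsFlat F (ℓ + 1) B ∧ a ≤ B} :=
              Nat.card_congr (Equiv.subtypeEquivRight (fun B =>
                ⟨fun h => h.2, fun h => ⟨ha2, h⟩⟩))
            rw [heq, hDup a ha2]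
          · intro a ha2
            haveI : IsEmpty {B : AffineSubspace F (Fin k → F) //
                (IsFlat F ℓ a ∧ IsFlat F (ℓ + 1) B ∧ a ≤ B)} := ⟨fun B => ha2 B.2.1⟩
            exact Nat.card_of_isEmpty
  have hP2b : Nat.card {x : AffineSubspace F (Fin k → F) × AffineSubspace F (Fin k → F) //
        (IsFlat F ℓ x.1 ∧ IsFlat F (ℓ + 1) x.2 ∧ x.1 ≤ x.2)} =
      Nat.card {A : AffineSubspace F (Fin k → F) // IsFlat F (ℓ + 1) A} * d := by
    calc Nat.card {x : AffineSubspace F (Fin k → F) × AffineSubspace F (Fin k → F) //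
          (IsFlat F ℓ x.1 ∧ IsFlat F (ℓ + 1) x.2 ∧ x.1 ≤ x.2)}
        = Nat.card {x : AffineSubspace F (Fin k → F) × AffineSubspace F (Fin k → F) //
            (IsFlat F ℓ x.2 ∧ IsFlat F (ℓ + 1) x.1 ∧ x.2 ≤ x.1)} :=
          ShadowAux.swap_pair_card
            (fun (a : AffineSubspace F (Fin k → F)) (B : AffineSubspace F (Fin k → F)) =>
              (IsFlat F ℓ a ∧ IsFlat F (ℓ + 1) B ∧ a ≤ B))
      _ = ∑ b : AffineSubspace F (Fin k → F),
            Nat.card {a : AffineSubspace F (Fin k → F) //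
              (IsFlat F ℓ a ∧ IsFlat F (ℓ + 1) b ∧ a ≤ b)} :=
          ShadowAux.card_pair_fst
            (fun (b : AffineSubspace F (Fin k → F)) (a : AffineSubspace F (Fin k → F)) =>
              (IsFlat F ℓ a ∧ IsFlat F (ℓ + 1) b ∧ a ≤ b))
      _ = Nat.card {A : AffineSubspace F (Fin k → F) // IsFlat F (ℓ + 1) A} * d := by
          apply ShadowAux.sum_card_const (P := fun b => IsFlat F (ℓ + 1) b)
          · intro b hb2
            have heq : Nat.card {a : AffineSubspace F (Fin k → F) //
                  (IsFlat F ℓ a ∧ IsFlat F (ℓ + 1) b ∧ a ≤ b)} =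
                Nat.card {a : AffineSubspace F (Fin k → F) // IsFlat F ℓ a ∧ a ≤ b} :=
              Nat.card_congr (Equiv.subtypeEquivRight (fun a =>
                ⟨fun h => ⟨h.1, h.2.2⟩, fun h => ⟨h.1, hb2, h.2⟩⟩))
            rw [heq, hddown b hb2]
          · intro b hb2
            haveI : IsEmpty {a : AffineSubspace F (Fin k → F) //
                (IsFlat F ℓ a ∧ IsFlat F (ℓ + 1) b ∧ a ≤ b)} := ⟨fun a => hb2 a.2.2.1⟩
            exact Nat.card_of_isEmpty
  -- degree support lies in the upper shadow
  have hdegup : ∀ b : AffineSubspace F (Fin k → F), deg b ≠ 0 →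
      IsFlat F (ℓ + 1) b ∧ b ∈ upShadow F k ℓ S := by
    intro b hb
    simp only [hdegdef] at hb
    obtain ⟨⟨A, hbf, ⟨hAf, hAS⟩, hAb⟩⟩ := (Nat.card_ne_zero.mp hb).1
    exact ⟨hbf, hbf, A, hAS, hAb⟩
  -- Cauchy-Schwarz
  classical
  set sF : Finset (AffineSubspace F (Fin k → F)) :=
    Finset.univ.filter (fun b => deg b ≠ 0) with hsF
  have hMsum : ((Nat.card {x : AffineSubspace F (Fin k → F) × AffineSubspace F (Fin k → F) //
        ((IsFlat F ℓ x.1 ∧ x.1 ∈ S) ∧ IsFlat F (ℓ + 1) x.2 ∧ x.1 ≤ x.2)} : ℕ) : ℝ) =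
      ∑ b ∈ sF, (deg b : ℝ) := by
    rw [hM2]
    push_cast
    exact (Finset.sum_filter_of_ne (fun b _ h => by exact_mod_cast h)).symm
  have hN2sum : ((Nat.card {T : AffineSubspace F (Fin k → F) × AffineSubspace F (Fin k → F) ×
        AffineSubspace F (Fin k → F) //
        walkTriple F k ℓ T ∧ T.1 ∈ S ∧ T.2.2 ∈ S} : ℕ) : ℝ) =
      ∑ b ∈ sF, (deg b : ℝ) ^ 2 := by
    rw [hN2]
    push_cast
    rw [show (fun b => ((deg b : ℝ) * (deg b : ℝ))) = fun b => (deg b : ℝ) ^ 2 by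
      funext b; ring]
    exact (Finset.sum_filter_of_ne (fun b _ h => by
      intro h0
      rw [h0] at h
      simp at h)).symm
  have hCS : ((Nat.card {x : AffineSubspace F (Fin k → F) × AffineSubspace F (Fin k → F) //
        ((IsFlat F ℓ x.1 ∧ x.1 ∈ S) ∧ IsFlat F (ℓ + 1) x.2 ∧ x.1 ≤ x.2)} : ℕ) : ℝ) ^ 2 ≤
      ((Nat.card {A : AffineSubspace F (Fin k → F) //
          IsFlat F (ℓ + 1) A ∧ A ∈ upShadow F k ℓ S} : ℕ) : ℝ) *
        ((Nat.card {T : AffineSubspace F (Fin k → F) × AffineSubspace F (Fin k → F) ×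
          AffineSubspace F (Fin k → F) //
          walkTriple F k ℓ T ∧ T.1 ∈ S ∧ T.2.2 ∈ S} : ℕ) : ℝ) := by
    rw [hMsum, hN2sum]
    refine (sq_sum_le_card_mul_sum_sq (s := sF) (f := fun b => (deg b : ℝ))).trans ?_
    apply mul_le_mul_of_nonneg_right ?_ (by positivity)
    have h2 : sF.card ≤ Nat.card {A : AffineSubspace F (Fin k → F) //
        IsFlat F (ℓ + 1) A ∧ A ∈ upShadow F k ℓ S} := by
      have h3 : sF.card = Nat.card {b : AffineSubspace F (Fin k → F) // deg b ≠ 0} := by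
        rw [Nat.card_eq_fintype_card, Fintype.card_subtype, hsF]
      rw [h3]
      exact Nat.card_le_card_of_injective (fun b => ⟨b.1, hdegup b.1 b.2⟩)
        (fun u v huv => Subtype.ext (congrArg
          (fun z : {A : AffineSubspace F (Fin k → F) //
            IsFlat F (ℓ + 1) A ∧ A ∈ upShadow F k ℓ S} => z.1) huv))
    exact_mod_cast h2
  -- positivity
  have hNSpos : 0 < Nat.card {A : AffineSubspace F (Fin k → F) // IsFlat F ℓ A ∧ A ∈ S} := by
    haveI : Nonempty {A : AffineSubspace F (Fin k → F) // IsFlat F ℓ A ∧ A ∈ S} :=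
      ⟨⟨A₀, hA₀, hA₀S⟩⟩
    exact Nat.card_pos
  have hNlpos : 0 < Nat.card {A : AffineSubspace F (Fin k → F) // IsFlat F ℓ A} := by
    haveI : Nonempty {A : AffineSubspace F (Fin k → F) // IsFlat F ℓ A} := ⟨⟨A₀, hA₀⟩⟩
    exact Nat.card_pos
  have hNl1pos : 0 < Nat.card {A : AffineSubspace F (Fin k → F) // IsFlat F (ℓ + 1) A} := by
    haveI : Nonempty {A : AffineSubspace F (Fin k → F) // IsFlat F (ℓ + 1) A} := ⟨⟨B₀, hB₀⟩⟩
    exact Nat.card_pos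
  have hN1pos : 0 < Nat.card {T : AffineSubspace F (Fin k → F) ×
      AffineSubspace F (Fin k → F) × AffineSubspace F (Fin k → F) //
      walkTriple F k ℓ T ∧ T.1 ∈ S} := by
    haveI : Nonempty {T : AffineSubspace F (Fin k → F) ×
        AffineSubspace F (Fin k → F) × AffineSubspace F (Fin k → F) //
        walkTriple F k ℓ T ∧ T.1 ∈ S} :=
      ⟨⟨(A₀, B₀, A₀), ⟨hA₀, hB₀, hA₀, hA₀B₀, hA₀B₀⟩, hA₀S⟩⟩
    exact Nat.card_pos
  have hN2pos : 0 < Nat.card {T : AffineSubspace F (Fin k → F) ×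
      AffineSubspace F (Fin k → F) × AffineSubspace F (Fin k → F) //
      walkTriple F k ℓ T ∧ T.1 ∈ S ∧ T.2.2 ∈ S} := by
    haveI : Nonempty {T : AffineSubspace F (Fin k → F) ×
        AffineSubspace F (Fin k → F) × AffineSubspace F (Fin k → F) //
        walkTriple F k ℓ T ∧ T.1 ∈ S ∧ T.2.2 ∈ S} :=
      ⟨⟨(A₀, B₀, A₀), ⟨hA₀, hB₀, hA₀, hA₀B₀, hA₀B₀⟩, hA₀S, hA₀S⟩⟩
    exact Nat.card_pos
  -- assemble
  constructor
  · simp only [stayProb]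
    apply div_pos
    · exact_mod_cast hN2pos
    · exact_mod_cast hN1pos
  · rw [ge_iff_le]
    simp only [mu, stayProb]
    set nS : ℕ := Nat.card {A : AffineSubspace F (Fin k → F) // IsFlat F ℓ A ∧ A ∈ S}
      with hnS
    set nl : ℕ := Nat.card {A : AffineSubspace F (Fin k → F) // IsFlat F ℓ A} with hnl
    set nl1 : ℕ := Nat.card {A : AffineSubspace F (Fin k → F) // IsFlat F (ℓ + 1) A} with hnl1
    set nup : ℕ := Nat.card {A : AffineSubspace F (Fin k → F) //
      IsFlat F (ℓ + 1) A ∧ A ∈ upShadow F k ℓ S} with hnup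
    set n1 : ℕ := Nat.card {T : AffineSubspace F (Fin k → F) ×
      AffineSubspace F (Fin k → F) × AffineSubspace F (Fin k → F) //
      walkTriple F k ℓ T ∧ T.1 ∈ S} with hn1
    set n2 : ℕ := Nat.card {T : AffineSubspace F (Fin k → F) ×
      AffineSubspace F (Fin k → F) × AffineSubspace F (Fin k → F) //
      walkTriple F k ℓ T ∧ T.1 ∈ S ∧ T.2.2 ∈ S} with hn2
    have hb1 : (0:ℝ) < (nl : ℝ) := by exact_mod_cast hNlpos
    have hb2 : (0:ℝ) < (nl1 : ℝ) := by exact_mod_cast hNl1pos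
    have hb3 : (0:ℝ) < (n1 : ℝ) := by exact_mod_cast hN1pos
    have hb4 : (0:ℝ) < (n2 : ℝ) := by exact_mod_cast hN2pos
    have hr1 : (n1 : ℝ) = (nS : ℝ) * ((D : ℝ) * (d : ℝ)) := by exact_mod_cast hN1
    have hr2 : (nl : ℝ) * (D : ℝ) = (nl1 : ℝ) * (d : ℝ) := by
      have := hP2a.symm.trans hP2b
      exact_mod_cast this
    have hr3 : ((nS : ℝ) * (D : ℝ)) ^ 2 ≤ (nup : ℝ) * (n2 : ℝ) := by
      rw [hM1] at hCS
      exact_mod_cast hCS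
    have key : (nS : ℝ) * (n1 : ℝ) * (nl1 : ℝ) ≤ (nup : ℝ) * ((nl : ℝ) * (n2 : ℝ)) := by
      calc (nS : ℝ) * (n1 : ℝ) * (nl1 : ℝ)
          = ((nS : ℝ) * (D : ℝ)) ^ 2 * (nl : ℝ) := by
            rw [hr1]
            linear_combination (-(nS : ℝ) ^ 2 * (D : ℝ)) * hr2
        _ ≤ (nup : ℝ) * (n2 : ℝ) * (nl : ℝ) :=
            mul_le_mul_of_nonneg_right hr3 (le_of_lt hb1)
        _ = (nup : ℝ) * ((nl : ℝ) * (n2 : ℝ)) := by ring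
    have hL : (nS : ℝ) / (nl : ℝ) / ((n2 : ℝ) / (n1 : ℝ)) =
        ((nS : ℝ) * (n1 : ℝ)) / ((nl : ℝ) * (n2 : ℝ)) := by
      rw [div_div_div_comm, div_div_eq_mul_div, div_mul_eq_mul_div, div_div]
      ring
    rw [hL, div_le_div_iff₀ (mul_pos hb1 hb4) hb2]
    exact key
end

section
/- Let q=p^r with p prime, let ℓ,k∈ℕ, and let H be the Markov averaging operator of the Cayley graph on (F_q^k)^{ℓ+1}: (HG)(v) is the expectation of G(u) over a random step u from v. Let α=(α_0,α_1,…,α_ℓ)∈(F_q^k)^{ℓ+1} and let d = dim span(α_0,α_1,…,α_ℓ) ⊆ F_q^k. Then χ_α is an eigenfunction of H with eigenvalue q^{−d}, i.e., Hχ_α = q^{−d}·χ_α. -/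
open scoped Classical

/-- Vertices of the Cayley graph: tuples `(s, x₁, …, x_ℓ)` of vectors in `F^k`. -/
abbrev CayleyVertex (F : Type) (k ℓ : ℕ) : Type := (Fin k → F) × (Fin ℓ → (Fin k → F))

/-- One step of the Cayley graph walk, with randomness `y, b₀, b`. -/
def cayleyStep (F : Type) [Field F] {k ℓ : ℕ} (v : CayleyVertex F k ℓ)
    (y : Fin k → F) (b₀ : F) (b : Fin ℓ → F) : CayleyVertex F k ℓ :=
  (v.1 + b₀ • y, fun i => v.2 i + b i • y)

/-- The affine subspace `s + span(x₁,…,x_ℓ)` represented by a Cayley vertex. -/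
def flatOf (F : Type) [Field F] {k ℓ : ℕ} (v : CayleyVertex F k ℓ) :
    AffineSubspace F (Fin k → F) :=
  AffineSubspace.mk' v.1 (Submodule.span F (Set.range v.2))

/-- The set `S⋆` in the Cayley graph associated with a set `S` of `ℓ`-flats. -/
def starSet (F : Type) [Field F] {k : ℕ} (ℓ : ℕ) (S : Set (AffineSubspace F (Fin k → F))) :
    Set (CayleyVertex F k ℓ) :=
  {v | Module.finrank F (Submodule.span F (Set.range v.2)) = ℓ ∧ flatOf F v ∈ S}

/-- `1 − Φ(T)` for a subset `T` of the Cayley graph: the probability that a uniformly random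
step from a uniform element of `T` stays inside `T`. -/
noncomputable def cayleyStay (F : Type) [Field F] {k ℓ : ℕ} (T : Set (CayleyVertex F k ℓ)) : ℝ :=
  (Nat.card {w : CayleyVertex F k ℓ × (Fin k → F) × F × (Fin ℓ → F) //
      w.1 ∈ T ∧ cayleyStep F w.1 w.2.1 w.2.2.1 w.2.2.2 ∈ T} : ℝ) /
  (Nat.card {w : CayleyVertex F k ℓ × (Fin k → F) × F × (Fin ℓ → F) // w.1 ∈ T} : ℝ)

/-- The character `χ_α` of the Cayley graph, where `q = p^r`. -/
noncomputable def chi (p : ℕ) (F : Type) [Field F] [Fintype F] [Algebra (ZMod p) F]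
    {k ℓ : ℕ} (α v : CayleyVertex F k ℓ) : ℂ :=
  Complex.exp (2 * Real.pi * Complex.I *
    (((Algebra.trace (ZMod p) F
      ((∑ j, α.1 j * v.1 j) + ∑ i, ∑ j, α.2 i j * v.2 i j)).val : ℕ) : ℂ) / (p : ℂ))

/-- The Markov averaging operator of the Cayley graph. -/
noncomputable def cayleyOp (F : Type) [Field F] [Fintype F] {k ℓ : ℕ}
    (G : CayleyVertex F k ℓ → ℂ) (v : CayleyVertex F k ℓ) : ℂ :=
  (∑ y : Fin k → F, ∑ b₀ : F, ∑ b : Fin ℓ → F, G (cayleyStep F v y b₀ b)) /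
    ((Fintype.card F : ℂ) ^ k * (Fintype.card F : ℂ) ^ (ℓ + 1))

/-- Fourier coefficient `F̂(α)`. -/
noncomputable def cFourierCoeff (p : ℕ) (F : Type) [Field F] [Fintype F] [Algebra (ZMod p) F]
    {k ℓ : ℕ} (G : CayleyVertex F k ℓ → ℂ) (α : CayleyVertex F k ℓ) : ℂ :=
  (∑ v : CayleyVertex F k ℓ, G v * (starRingEnd ℂ) (chi p F α v)) /
    (Fintype.card (CayleyVertex F k ℓ) : ℂ)

/-- The index set `Λ` of level-one characters. -/
def levelOneIndices (F : Type) [Field F] (k ℓ : ℕ) : Set (CayleyVertex F k ℓ) :=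
  {α | (Module.finrank F (Submodule.span F (Set.range α.2)) = 1 ∧
        α.1 ∈ Submodule.span F (Set.range α.2)) ∨ (α.2 = 0 ∧ α.1 ≠ 0)}

/-- The level-one part `F₁` of a function on the Cayley graph. -/
noncomputable def levelOnePart (p : ℕ) (F : Type) [Field F] [Fintype F] [Algebra (ZMod p) F]
    (k ℓ : ℕ) (G : CayleyVertex F k ℓ → ℂ) (v : CayleyVertex F k ℓ) : ℂ :=
  ∑ α ∈ Finset.univ.filter (fun α => α ∈ levelOneIndices F k ℓ),
    cFourierCoeff p F G α * chi p F α v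

/-- `μ(S⋆)`. -/
noncomputable def muStar (F : Type) [Field F] [Fintype F] {k : ℕ} (ℓ : ℕ)
    (S : Set (AffineSubspace F (Fin k → F))) : ℝ :=
  (Nat.card {v : CayleyVertex F k ℓ // v ∈ starSet F ℓ S} : ℝ) /
    (Fintype.card (CayleyVertex F k ℓ) : ℝ)

private lemma zmod_pow_val_add {ζ : ℂ} {p : ℕ} [NeZero p] (h1 : ζ ^ p = 1) (s t : ZMod p) :
    ζ ^ (s + t).val = ζ ^ s.val * ζ ^ t.val := by
  rw [← pow_add, ZMod.val_add]
  conv_rhs => rw [← Nat.mod_add_div (s.val + t.val) p]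
  rw [pow_add, pow_mul, h1, one_pow, mul_one]

private lemma zmod_pow_val_sum {ζ : ℂ} {p : ℕ} [NeZero p] (h1 : ζ ^ p = 1) {ι : Type*}
    (s : Finset ι) (f : ι → ZMod p) : ζ ^ (∑ i ∈ s, f i).val = ∏ i ∈ s, ζ ^ (f i).val := by
  induction s using Finset.cons_induction with
  | empty => simp
  | cons a s ha ih => rw [Finset.sum_cons, Finset.prod_cons, zmod_pow_val_add h1, ih]

private lemma charSum (p : ℕ) (hp : p.Prime) (F : Type) [Field F] [Fintype F]
    [Algebra (ZMod p) F] (c : F) :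
    (∑ b : F, Complex.exp (2 * Real.pi * Complex.I / p) ^
        (Algebra.trace (ZMod p) F (b * c)).val) =
      if c = 0 then (Fintype.card F : ℂ) else 0 := by
  haveI : Fact p.Prime := ⟨hp⟩
  set ζ := Complex.exp (2 * Real.pi * Complex.I / p) with hζdef
  have hprim : IsPrimitiveRoot ζ p := Complex.isPrimitiveRoot_exp p hp.ne_zero
  have h1 : ζ ^ p = 1 := hprim.pow_eq_one
  by_cases hc : c = 0
  · subst hc; simp
  · rw [if_neg hc]
    obtain ⟨b', hb'⟩ : ∃ b', Algebra.trace (ZMod p) F (b' * c) ≠ 0 := by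
      haveI : FiniteDimensional (ZMod p) F := Module.Finite.of_finite
      have h := traceForm_nondegenerate (ZMod p) F
      obtain ⟨b, hb⟩ := not_forall.mp (fun hh => hc (h.1 c hh))
      exact ⟨b, by rwa [mul_comm, ← Algebra.traceForm_apply (ZMod p)]⟩
    set S := ∑ b : F, ζ ^ (Algebra.trace (ZMod p) F (b * c)).val with hS
    have hshift : ζ ^ (Algebra.trace (ZMod p) F (b' * c)).val * S = S := by
      rw [hS, Finset.mul_sum]
      rw [← Fintype.sum_equiv (Equiv.addLeft b')
        (fun b => ζ ^ (Algebra.trace (ZMod p) F ((b' + b) * c)).val)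
        (fun b => ζ ^ (Algebra.trace (ZMod p) F (b * c)).val) (fun b => by
          simp [Equiv.coe_addLeft])]
      refine Finset.sum_congr rfl fun b _ => ?_
      rw [← zmod_pow_val_add h1, ← map_add, ← add_mul]
    have hne : ζ ^ (Algebra.trace (ZMod p) F (b' * c)).val ≠ 1 := by
      refine hprim.pow_ne_one_of_pos_of_lt ?_ (ZMod.val_lt _)
      simpa [ZMod.val_eq_zero] using hb'
    have h0 : (ζ ^ (Algebra.trace (ZMod p) F (b' * c)).val - 1) * S = 0 := by
      rw [sub_mul, one_mul, hshift, sub_self]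
    rcases mul_eq_zero.mp h0 with h | h
    · exact absurd (sub_eq_zero.mp h) hne
    · exact h

private def dotB (F : Type) [Field F] (k : ℕ) :
    (Fin k → F) →ₗ[F] Module.Dual F (Fin k → F) :=
  LinearMap.mk₂ F (fun y x => ∑ j, x j * y j)
    (fun y₁ y₂ x => by simp [mul_add, Finset.sum_add_distrib])
    (fun a y x => by simp [Finset.mul_sum]; ring_nf; simp [mul_comm, mul_left_comm])
    (fun y x₁ x₂ => by simp [add_mul, Finset.sum_add_distrib])
    (fun a y x => by simp [Finset.mul_sum, mul_assoc])

private lemma dotB_apply (F : Type) [Field F] (k : ℕ) (y x : Fin k → F) :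
    dotB F k y x = ∑ j, x j * y j := rfl

private lemma dotB_injective (F : Type) [Field F] (k : ℕ) :
    Function.Injective (dotB F k) := by
  intro y₁ y₂ h
  funext j
  have := DFunLike.congr_fun h (Pi.single j 1)
  simpa [dotB_apply, Pi.single_apply, Finset.sum_ite_eq'] using this

private lemma card_orth (F : Type) [Field F] [Fintype F] (k : ℕ)
    (W : Submodule F (Fin k → F)) :
    Fintype.card {y : Fin k → F // ∀ w ∈ W, ∑ j, w j * y j = 0} *
      Fintype.card F ^ (Module.finrank F W) = Fintype.card F ^ k := by
  set Φ : (Fin k → F) →ₗ[F] Module.Dual F W := W.subtype.dualMap ∘ₗ dotB F k with hΦ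
  have hker : ∀ y, (y ∈ LinearMap.ker Φ ↔ ∀ w ∈ W, ∑ j, w j * y j = 0) := by
    intro y
    rw [LinearMap.mem_ker]
    constructor
    · intro h w hw
      have := DFunLike.congr_fun h ⟨w, hw⟩
      simpa [hΦ, dotB_apply] using this
    · intro h
      ext w
      simpa [hΦ, dotB_apply] using h w w.2
  have hdotsurj : Function.Surjective (dotB F k) := by
    rw [← LinearMap.range_eq_top]
    apply Submodule.eq_top_of_finrank_eq
    rw [LinearMap.finrank_range_of_inj (dotB_injective F k)]
    rw [Subspace.dual_finrank_eq]
  have hsurj : Function.Surjective Φ :=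
    (LinearMap.dualMap_surjective_of_injective W.injective_subtype).comp hdotsurj
  have h1 : Module.finrank F W + Module.finrank F (LinearMap.ker Φ) = k := by
    have := LinearMap.finrank_range_add_finrank_ker Φ
    rwa [LinearMap.range_eq_top.mpr hsurj, finrank_top, Subspace.dual_finrank_eq,
      Module.finrank_fin_fun] at this
  have hcard : Fintype.card {y : Fin k → F // ∀ w ∈ W, ∑ j, w j * y j = 0} =
      Fintype.card F ^ Module.finrank F (LinearMap.ker Φ) := by
    rw [← Module.card_eq_pow_finrank (K := F) (V := LinearMap.ker Φ)]
    exact Fintype.card_congr (Equiv.subtypeEquivRight fun y => (hker y).symm)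
  rw [hcard, ← pow_add, add_comm, h1]

set_option maxHeartbeats 2000000 in
/-- Each character `χ_α` is an eigenfunction of the Markov averaging operator
of the Cayley graph, with eigenvalue `q^{−d}` where `d = dim span(α₀, α₁, …, α_ℓ)`. -/
theorem chi_eigenfunction (p r : ℕ) (hp : p.Prime) (hr : 1 ≤ r)
    (F : Type) [Field F] [Fintype F] [Algebra (ZMod p) F] (hF : Fintype.card F = p ^ r)
    (k ℓ : ℕ) (α : CayleyVertex F k ℓ) :
    ∀ v : CayleyVertex F k ℓ,
      cayleyOp F (chi p F α) v =
        (((p : ℂ) ^ r) ^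
            (Module.finrank F
              (Submodule.span F (insert α.1 (Set.range α.2)) : Submodule F (Fin k → F))))⁻¹ *
          chi p F α v := by
  intro v
  haveI : Fact p.Prime := ⟨hp⟩
  set ζ : ℂ := Complex.exp (2 * Real.pi * Complex.I / p) with hζ
  have h1 : ζ ^ p = 1 := (Complex.isPrimitiveRoot_exp p hp.ne_zero).pow_eq_one
  set W : Submodule F (Fin k → F) := Submodule.span F (insert α.1 (Set.range α.2)) with hW
  set d : ℕ := Module.finrank F W with hd
  have hchi : ∀ u : CayleyVertex F k ℓ, chi p F α u =
      ζ ^ (Algebra.trace (ZMod p) F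
        ((∑ j, α.1 j * u.1 j) + ∑ i, ∑ j, α.2 i j * u.2 i j)).val := by
    intro u
    rw [chi, hζ, ← Complex.exp_nat_mul]
    congr 1
    ring
  have hstep : ∀ (y : Fin k → F) (b₀ : F) (b : Fin ℓ → F),
      chi p F α (cayleyStep F v y b₀ b) =
        chi p F α v * ((ζ ^ (Algebra.trace (ZMod p) F (b₀ * ∑ j, α.1 j * y j)).val) *
          ∏ i, ζ ^ (Algebra.trace (ZMod p) F (b i * ∑ j, α.2 i j * y j)).val) := by
    intro y b₀ b
    rw [hchi, hchi, ← zmod_pow_val_sum h1, ← zmod_pow_val_add h1, ← zmod_pow_val_add h1,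
      ← map_sum, ← map_add, ← map_add]
    congr 2
    simp only [cayleyStep, Pi.add_apply, Pi.smul_apply, smul_eq_mul, mul_add,
      Finset.sum_add_distrib, Finset.mul_sum]
    ring_nf
    simp [mul_comm, mul_left_comm]
    abel
  have hinner : ∀ y : Fin k → F,
      (∑ b₀ : F, ∑ b : Fin ℓ → F, chi p F α (cayleyStep F v y b₀ b)) =
        if ((∑ j, α.1 j * y j) = 0 ∧ ∀ i, (∑ j, α.2 i j * y j) = 0) then
          (Fintype.card F : ℂ) ^ (ℓ + 1) * chi p F α v else 0 := by
    intro y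
    simp only [hstep]
    simp_rw [← Finset.mul_sum, ← Finset.sum_mul]
    rw [show (∑ b : Fin ℓ → F, ∏ i,
          ζ ^ (Algebra.trace (ZMod p) F (b i * ∑ j, α.2 i j * y j)).val) =
        ∏ i, ∑ c : F, ζ ^ (Algebra.trace (ZMod p) F (c * ∑ j, α.2 i j * y j)).val from
      (Fintype.prod_sum (κ := fun _ : Fin ℓ => F)
        (fun i c => ζ ^ ((Algebra.trace (ZMod p) F) (c * ∑ j, α.2 i j * y j)).val)).symm]
    rw [charSum p hp F]
    have hprod : (∏ i, ∑ c : F, ζ ^ (Algebra.trace (ZMod p) F (c * ∑ j, α.2 i j * y j)).val) =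
        if (∀ i, (∑ j, α.2 i j * y j) = 0) then (Fintype.card F : ℂ) ^ ℓ else 0 := by
      have hcs := charSum p hp F
      rw [← hζ] at hcs
      simp_rw [hcs]
      by_cases hall : ∀ i, (∑ j, α.2 i j * y j) = 0
      · rw [if_pos hall]
        rw [Finset.prod_congr rfl (fun i _ => if_pos (hall i)), Finset.prod_const,
          Finset.card_univ, Fintype.card_fin]
      · rw [if_neg hall]
        obtain ⟨i₀, hi₀⟩ := not_forall.mp hall
        exact Finset.prod_eq_zero (Finset.mem_univ i₀) (if_neg hi₀)
    rw [hprod]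
    by_cases h0 : (∑ j, α.1 j * y j) = 0
    · by_cases hall : ∀ i, (∑ j, α.2 i j * y j) = 0
      · simp only [if_pos h0, if_pos hall, if_pos (show _ ∧ _ from ⟨h0, hall⟩)]
        ring
      · simp [h0, hall]
    · simp [h0]
  have hPiff : ∀ y : Fin k → F, (∀ w ∈ W, ∑ j, w j * y j = 0) ↔
      ((∑ j, α.1 j * y j) = 0 ∧ ∀ i, (∑ j, α.2 i j * y j) = 0) := by
    intro y
    constructor
    · intro h
      exact ⟨h α.1 (Submodule.subset_span (Set.mem_insert _ _)),
        fun i => h (α.2 i) (Submodule.subset_span (Set.mem_insert_of_mem _ ⟨i, rfl⟩))⟩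
    · rintro ⟨h0, hall⟩ w hw
      have hle : W ≤ LinearMap.ker (dotB F k y) := by
        rw [hW]
        apply Submodule.span_le.mpr
        rintro w (rfl | ⟨i, rfl⟩)
        · simpa [LinearMap.mem_ker, dotB_apply] using h0
        · simpa [LinearMap.mem_ker, dotB_apply] using hall i
      simpa [LinearMap.mem_ker, dotB_apply] using hle hw
  rw [cayleyOp]
  simp only [hinner]
  rw [Finset.sum_ite, Finset.sum_const, Finset.sum_const_zero, add_zero]
  rw [show (Finset.filter (fun y : Fin k → F =>
      (∑ j, α.1 j * y j) = 0 ∧ ∀ i, (∑ j, α.2 i j * y j) = 0) Finset.univ).card =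
    Fintype.card {y : Fin k → F // ∀ w ∈ W, ∑ j, w j * y j = 0} from by
    rw [Fintype.card_subtype]
    apply Finset.card_bij (fun y _ => y) <;> simp [hPiff]]
  have hNq : (Fintype.card {y : Fin k → F // ∀ w ∈ W, ∑ j, w j * y j = 0} : ℂ) *
      (Fintype.card F : ℂ) ^ d = (Fintype.card F : ℂ) ^ k := by
    exact_mod_cast congrArg (Nat.cast : ℕ → ℂ) (card_orth F k W)
  have hpr : ((p : ℂ) ^ r) = (Fintype.card F : ℂ) := by
    rw [hF]; push_cast; ring
  have hq0 : (Fintype.card F : ℂ) ≠ 0 := by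
    exact_mod_cast Fintype.card_ne_zero
  rw [hpr, nsmul_eq_mul]
  set N : ℂ := (Fintype.card {y : Fin k → F // ∀ w ∈ W, ∑ j, w j * y j = 0} : ℂ) with hN
  rw [div_eq_iff (mul_ne_zero (pow_ne_zero _ hq0) (pow_ne_zero _ hq0))]
  field_simp
  linear_combination (chi p F α v) * hNq
end
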